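/- Define V(q) = q^{−s} Σ_{(a1,a2): gcd(a1,a2,q)=1} Π_{i=1}^{s} V(q, λ_i a1, λ_i a2), where V(q,b1,b2) = Σ_{r=1}^{q} e((b2 r² + b1 r)/q) and λ1,...,λs are fixed nonzero integers. Then V is multiplicative: if gcd(q,t) = 1 then V(qt) = V(q) V(t). -/

import Mathlib

open Finset Complex

noncomputable def Vloc (q : ℕ) (b1 b2 : ℤ) : ℂ :=
  ∑ r ∈ Finset.Icc 1 q,
    Complex.exp (2 * Real.pi * Complex.I * (((b2 * r ^ 2 + b1 * r : ℤ) : ℝ) / q))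

noncomputable def Vnorm (s : ℕ) (lam : Fin s → ℤ) (q : ℕ) : ℂ :=
  (q : ℂ) ^ (-(s : ℤ)) *
    ∑ a ∈ (Finset.Icc 1 q ×ˢ Finset.Icc 1 q).filter
        (fun a => Nat.gcd a.1 (Nat.gcd a.2 q) = 1),
      ∏ i, Vloc q (lam i * a.1) (lam i * a.2)

namespace Stmt9

/-! ### The additive character `E q n = e(n/q)` -/

noncomputable def E (q : ℕ) (n : ℤ) : ℂ :=
  Complex.exp (2 * Real.pi * Complex.I * ((n : ℝ) / q))

lemma E_add (q : ℕ) (m n : ℤ) : E q (m + n) = E q m * E q n := by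
  rw [E, E, E, ← Complex.exp_add]
  congr 1
  push_cast
  ring

lemma E_mul_base (q : ℕ) (hq : q ≠ 0) (k : ℤ) : E q ((q : ℤ) * k) = 1 := by
  have hq' : (q : ℂ) ≠ 0 := Nat.cast_ne_zero.mpr hq
  rw [E]
  have h : ((((q : ℤ) * k : ℤ) : ℝ) : ℂ) / ((q : ℕ) : ℂ) = (k : ℂ) := by
    push_cast; field_simp
  rw [h, show 2 * (Real.pi : ℂ) * Complex.I * (k : ℂ)
      = (k : ℂ) * (2 * Real.pi * Complex.I) from by ring]
  exact Complex.exp_int_mul_two_pi_mul_I k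

lemma E_congr (q : ℕ) (hq : q ≠ 0) {m n : ℤ} (h : (q : ℤ) ∣ m - n) : E q m = E q n := by
  obtain ⟨k, hk⟩ := h
  have : m = n + (q : ℤ) * k := by linarith
  rw [this, E_add, E_mul_base q hq, mul_one]

lemma E_tmul (q t : ℕ) (hq : q ≠ 0) (ht : t ≠ 0) (n : ℤ) :
    E (q * t) ((t : ℤ) * n) = E q n := by
  rw [E, E]
  congr 1
  have hq' : (q : ℂ) ≠ 0 := Nat.cast_ne_zero.mpr hq
  have ht' : (t : ℂ) ≠ 0 := Nat.cast_ne_zero.mpr ht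
  push_cast
  field_simp

lemma E_qmul (q t : ℕ) (hq : q ≠ 0) (ht : t ≠ 0) (n : ℤ) :
    E (q * t) ((q : ℤ) * n) = E t n := by
  rw [mul_comm q t]; exact E_tmul t q ht hq n

/-! ### `Vloc` as a sum over `range q`, congruence, multiplicativity -/

/-- shift an `Icc 1 N` sum to a `range N` sum, given period-endpoint equality -/
lemma sum_Icc_eq_range (N : ℕ) (f : ℕ → ℂ) (hf : f N = f 0) :
    ∑ r ∈ Icc 1 N, f r = ∑ r ∈ range N, f r := by
  have h0 : Icc 1 N = Ico 1 (N + 1) := by rw [Finset.Ico_add_one_right_eq_Icc]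
  rw [h0, Finset.sum_Ico_eq_sum_range]
  simp only [Nat.add_sub_cancel]
  have h1 : ∑ i ∈ range (N + 1), f i = (∑ i ∈ range N, f (i + 1)) + f 0 :=
    Finset.sum_range_succ' f N
  have h2 : ∑ i ∈ range (N + 1), f i = (∑ i ∈ range N, f i) + f N :=
    Finset.sum_range_succ f N
  have h3 : ∀ i, f (1 + i) = f (i + 1) := fun i => by rw [add_comm]
  simp only [h3]
  linear_combination h2 - h1 + hf

lemma Vloc_eq (q : ℕ) (hq : 0 < q) (b1 b2 : ℤ) :
    Vloc q b1 b2 = ∑ r ∈ range q, E q (b2 * (r : ℤ) ^ 2 + b1 * r) := by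
  have : Vloc q b1 b2 = ∑ r ∈ Icc 1 q, E q (b2 * (r : ℤ) ^ 2 + b1 * r) := rfl
  rw [this]
  apply sum_Icc_eq_range
  apply E_congr q hq.ne'
  push_cast
  exact ⟨b2 * q + b1, by ring⟩

lemma Vloc_congr {q : ℕ} (hq : 0 < q) {b1 b1' b2 b2' : ℤ}
    (h1 : (q : ℤ) ∣ b1 - b1') (h2 : (q : ℤ) ∣ b2 - b2') :
    Vloc q b1 b2 = Vloc q b1' b2' := by
  rw [Vloc_eq q hq, Vloc_eq q hq]
  refine Finset.sum_congr rfl fun r _ => E_congr q hq.ne' ?_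
  have : b2 * (r : ℤ) ^ 2 + b1 * r - (b2' * (r : ℤ) ^ 2 + b1' * r)
      = (b2 - b2') * (r : ℤ) ^ 2 + (b1 - b1') * r := by ring
  rw [this]
  exact dvd_add (h2.mul_right _) (h1.mul_right _)

/-! ### bijection lemmas on `range` -/

/-- multiplication by a unit is a bijection on `range q` -/
lemma sum_range_unit (q c : ℕ) (hc : Nat.Coprime c q) (g : ℕ → ℂ) :
    ∑ n ∈ range q, g (c * n % q) = ∑ n ∈ range q, g n := by
  rcases Nat.eq_zero_or_pos q with rfl | hq
  · simp
  have hinj : Set.InjOn (fun n => c * n % q) (range q) := by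
    intro a ha b hb h
    simp only [Finset.coe_range, Set.mem_Iio] at ha hb
    have : a ≡ b [MOD q] := Nat.ModEq.cancel_left_of_coprime (by rwa [Nat.coprime_comm] at hc) h
    calc a = a % q := (Nat.mod_eq_of_lt ha).symm
    _ = b % q := this
    _ = b := Nat.mod_eq_of_lt hb
  have himg : Finset.image (fun n => c * n % q) (range q) = range q := by
    apply Finset.eq_of_subset_of_card_le
    · intro x hx
      simp only [Finset.mem_image, Finset.mem_range] at hx ⊢
      obtain ⟨n, _, rfl⟩ := hx
      exact Nat.mod_lt _ hq
    · rw [Finset.card_image_of_injOn hinj]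
  conv_rhs => rw [← himg]
  rw [Finset.sum_image (fun a ha b hb h => hinj (by simpa using ha) (by simpa using hb) h)]

/-- CRT decomposition of `range (q*t)` -/
lemma sum_range_crt (q t : ℕ) (hq : 0 < q) (ht : 0 < t) (h : Nat.Coprime q t) (g : ℕ → ℂ) :
    ∑ n ∈ range (q * t), g n = ∑ x ∈ range q, ∑ y ∈ range t, g ((t * x + q * y) % (q * t)) := by
  have hqt : 0 < q * t := Nat.mul_pos hq ht
  have hinj : Set.InjOn (fun p : ℕ × ℕ => (t * p.1 + q * p.2) % (q * t))
      ↑(range q ×ˢ range t) := by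
    rintro ⟨a1, a2⟩ ha ⟨b1, b2⟩ hb hab
    simp only [Finset.mem_coe, Finset.mem_product, Finset.mem_range] at ha hb
    have hmod : t * a1 + q * a2 ≡ t * b1 + q * b2 [MOD q * t] := by
      simpa [Nat.ModEq] using hab
    have hq1 : t * a1 + q * a2 ≡ t * b1 + q * b2 [MOD q] :=
      hmod.of_dvd (dvd_mul_right q t)
    have ha2 : q * a2 ≡ q * 0 [MOD q] := by simp [Nat.ModEq, Nat.mul_mod_right]
    have hb2 : q * b2 ≡ q * 0 [MOD q] := by simp [Nat.ModEq, Nat.mul_mod_right]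
    have hq2 : t * a1 ≡ t * b1 [MOD q] :=
      Nat.ModEq.add_right_cancel (ha2.trans hb2.symm) hq1
    have e1 : a1 = b1 := by
      have := Nat.ModEq.cancel_left_of_coprime h hq2
      calc a1 = a1 % q := (Nat.mod_eq_of_lt ha.1).symm
      _ = b1 % q := this
      _ = b1 := Nat.mod_eq_of_lt hb.1
    subst e1
    have hq3 : q * a2 ≡ q * b2 [MOD q * t] := (Nat.ModEq.add_left_cancel' (t * a1) hmod)
    have e2 : a2 = b2 := by
      have hdvd : ((q * t : ℕ) : ℤ) ∣ (q * b2 : ℕ) - (q * a2 : ℕ) := hq3.dvd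
      have : (t : ℤ) ∣ (b2 : ℤ) - a2 := by
        obtain ⟨k, hk⟩ := hdvd
        refine ⟨k, ?_⟩
        have hq0 : (q : ℤ) ≠ 0 := Int.natCast_ne_zero.mpr hq.ne'
        apply mul_left_cancel₀ hq0
        push_cast at hk ⊢
        linarith
      have : a2 ≡ b2 [MOD t] := (Nat.modEq_iff_dvd).mpr this
      calc a2 = a2 % t := (Nat.mod_eq_of_lt ha.2).symm
      _ = b2 % t := this
      _ = b2 := Nat.mod_eq_of_lt hb.2
    simp [e2]
  have himg : Finset.image (fun p : ℕ × ℕ => (t * p.1 + q * p.2) % (q * t))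
      (range q ×ˢ range t) = range (q * t) := by
    apply Finset.eq_of_subset_of_card_le
    · intro x hx
      simp only [Finset.mem_image, Finset.mem_range] at hx ⊢
      obtain ⟨n, _, rfl⟩ := hx
      exact Nat.mod_lt _ hqt
    · rw [Finset.card_image_of_injOn hinj, Finset.card_product]
      simp
  conv_lhs => rw [← himg]
  rw [Finset.sum_image (fun a ha b hb hh => hinj (by simpa using ha) (by simpa using hb) hh)]
  rw [Finset.sum_product]

/-! ### the gcd condition -/

lemma cond_mod (n a b : ℕ) :
    Nat.gcd a (Nat.gcd b n) = Nat.gcd (a % n) (Nat.gcd (b % n) n) := by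
  have h1 : Nat.gcd b n = Nat.gcd (b % n) n := by
    rw [Nat.gcd_comm, Nat.gcd_rec]
  rw [h1]
  have hmn : Nat.gcd (b % n) n ∣ n := Nat.gcd_dvd_right _ _
  have h2 : Nat.gcd a (Nat.gcd (b % n) n)
      = Nat.gcd (a % Nat.gcd (b % n) n) (Nat.gcd (b % n) n) := by
    rw [Nat.gcd_comm, Nat.gcd_rec]
  have h3 : Nat.gcd (a % n) (Nat.gcd (b % n) n)
      = Nat.gcd (a % n % Nat.gcd (b % n) n) (Nat.gcd (b % n) n) := by
    rw [Nat.gcd_comm, Nat.gcd_rec]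
  rw [h2, h3, Nat.mod_mod_of_dvd a hmn]

lemma cond_congr {n a a' b b' : ℕ} (ha : a ≡ a' [MOD n]) (hb : b ≡ b' [MOD n]) :
    Nat.gcd a (Nat.gcd b n) = Nat.gcd a' (Nat.gcd b' n) := by
  rw [cond_mod n a b, cond_mod n a' b', ha, hb]

lemma cond_split {q t : ℕ} (h : Nat.Coprime q t) (a b : ℕ) :
    (Nat.gcd a (Nat.gcd b (q * t)) = 1) ↔
      (Nat.gcd a (Nat.gcd b q) = 1 ∧ Nat.gcd a (Nat.gcd b t) = 1) := by
  rw [← Nat.gcd_assoc, ← Nat.gcd_assoc, ← Nat.gcd_assoc]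
  exact Nat.coprime_mul_iff_right

lemma key_dvd (N : ℕ) (a b : ℕ) (h : a ≡ b [MOD N]) (c : ℤ) :
    (N : ℤ) ∣ c * b - c * a := by
  rw [← mul_sub]
  exact Dvd.dvd.mul_left h.dvd c

lemma gcd_mod (m q : ℕ) : Nat.gcd (m % q) q = Nat.gcd m q := by
  rw [← Nat.gcd_rec, Nat.gcd_comm]

lemma gcd_mod_of_dvd (a m q : ℕ) (h : m ∣ q) : Nat.gcd (a % q) m = Nat.gcd a m := by
  rw [← gcd_mod (a % q) m, Nat.mod_mod_of_dvd a h, gcd_mod]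

/-! ### `Vloc` multiplicativity -/

lemma E_P_congr (N : ℕ) (hN : N ≠ 0) (b1 b2 : ℤ) {m m' : ℕ} (h : m ≡ m' [MOD N]) :
    E N (b2 * (m : ℤ) ^ 2 + b1 * m) = E N (b2 * (m' : ℤ) ^ 2 + b1 * m') := by
  apply E_congr N hN
  obtain ⟨k, hk⟩ := (Nat.modEq_iff_dvd.mp h : (N : ℤ) ∣ (m' : ℤ) - m)
  refine ⟨-(b2 * ((m : ℤ) + m') + b1) * k, ?_⟩
  have hm : (m' : ℤ) = m + N * k := by linarith
  rw [hm]; ring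

lemma Vloc_mul {q t : ℕ} (hq : 0 < q) (ht : 0 < t) (h : Nat.Coprime q t) (b1 b2 : ℤ) :
    Vloc (q * t) b1 b2 = Vloc q b1 (b2 * t) * Vloc t b1 (b2 * q) := by
  have hqt : 0 < q * t := Nat.mul_pos hq ht
  rw [Vloc_eq (q * t) hqt, Vloc_eq q hq, Vloc_eq t ht]
  rw [sum_range_crt q t hq ht h (fun n => E (q * t) (b2 * (n : ℤ) ^ 2 + b1 * n))]
  rw [Finset.sum_mul_sum]
  refine Finset.sum_congr rfl fun x _ => Finset.sum_congr rfl fun y _ => ?_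
  have h1 : E (q * t) (b2 * (((t * x + q * y) % (q * t) : ℕ) : ℤ) ^ 2
        + b1 * ((t * x + q * y) % (q * t) : ℕ))
      = E (q * t) (b2 * ((t * x + q * y : ℕ) : ℤ) ^ 2 + b1 * ((t * x + q * y : ℕ) : ℤ)) :=
    E_P_congr (q * t) hqt.ne' b1 b2 (Nat.mod_modEq _ _)
  rw [h1]
  have e1 : (b2 * ((t * x + q * y : ℕ) : ℤ) ^ 2 + b1 * ((t * x + q * y : ℕ) : ℤ))
      = (t : ℤ) * (b2 * t * (x : ℤ) ^ 2 + b1 * x)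
        + ((q : ℤ) * (b2 * q * (y : ℤ) ^ 2 + b1 * y) + ((q * t : ℕ) : ℤ) * (2 * b2 * x * y)) := by
    push_cast; ring
  rw [e1, E_add, E_add, E_mul_base (q * t) hqt.ne', mul_one,
    E_tmul q t hq.ne' ht.ne', E_qmul q t hq.ne' ht.ne']

/-! ### the full summand -/

noncomputable def G (s : ℕ) (lam : Fin s → ℤ) (N : ℕ) (a1 a2 : ℕ) : ℂ :=
  if Nat.gcd a1 (Nat.gcd a2 N) = 1 then ∏ i, Vloc N (lam i * a1) (lam i * a2) else 0

lemma G_congr (s : ℕ) (lam : Fin s → ℤ) {N : ℕ} (hN : 0 < N) {a1 a1' a2 a2' : ℕ}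
    (h1 : a1 ≡ a1' [MOD N]) (h2 : a2 ≡ a2' [MOD N]) :
    G s lam N a1 a2 = G s lam N a1' a2' := by
  unfold G
  refine if_congr (by rw [cond_congr h1 h2]) (Finset.prod_congr rfl fun i _ => ?_) rfl
  exact Vloc_congr hN (key_dvd N _ _ h1.symm _) (key_dvd N _ _ h2.symm _)

lemma Vnorm_eq (s : ℕ) (lam : Fin s → ℤ) (N : ℕ) (hN : 0 < N) :
    Vnorm s lam N
      = (N : ℂ) ^ (-(s : ℤ)) * ∑ a1 ∈ range N, ∑ a2 ∈ range N, G s lam N a1 a2 := by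
  rw [Vnorm]
  congr 1
  rw [Finset.sum_filter, Finset.sum_product]
  have hmod : N ≡ 0 [MOD N] := Nat.modEq_zero_iff_dvd.mpr dvd_rfl
  have step1 : ∀ a1, ∑ a2 ∈ Icc 1 N,
      (if Nat.gcd a1 (Nat.gcd a2 N) = 1 then ∏ i, Vloc N (lam i * a1) (lam i * a2) else 0)
      = ∑ a2 ∈ range N, G s lam N a1 a2 := by
    intro a1
    exact sum_Icc_eq_range N (fun a2 => G s lam N a1 a2)
      (G_congr s lam hN (Nat.ModEq.refl a1) hmod)
  calc ∑ a1 ∈ Icc 1 N, ∑ a2 ∈ Icc 1 N,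
      (if Nat.gcd a1 (Nat.gcd a2 N) = 1 then ∏ i, Vloc N (lam i * a1) (lam i * a2) else 0)
      = ∑ a1 ∈ Icc 1 N, ∑ a2 ∈ range N, G s lam N a1 a2 :=
        Finset.sum_congr rfl fun a1 _ => step1 a1
    _ = ∑ a1 ∈ range N, ∑ a2 ∈ range N, G s lam N a1 a2 :=
        sum_Icc_eq_range N (fun a1 => ∑ a2 ∈ range N, G s lam N a1 a2)
          (Finset.sum_congr rfl fun a2 _ => G_congr s lam hN hmod (Nat.ModEq.refl a2))

lemma ite_mul_ite (P Q : Prop) [Decidable P] [Decidable Q] (X Y : ℂ) :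
    (if P ∧ Q then X * Y else 0) = (if P then X else 0) * (if Q then Y else 0) := by
  by_cases hP : P <;> by_cases hQ : Q <;> simp [hP, hQ]

lemma G_split (s : ℕ) (lam : Fin s → ℤ) {q t : ℕ} (hq : 0 < q) (ht : 0 < t)
    (hqt : Nat.Coprime q t) (x1 y1 x2 y2 : ℕ) :
    G s lam (q * t) ((t * x1 + q * y1) % (q * t)) ((t * x2 + q * y2) % (q * t))
      = G s lam q (t * x1 % q) (t * t * x2 % q) * G s lam t (q * y1 % t) (q * q * y2 % t) := by
  have hN : 0 < q * t := Nat.mul_pos hq ht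
  have htq : Nat.Coprime t q := hqt.symm
  set A1 := t * x1 + q * y1 with hA1def
  set A2 := t * x2 + q * y2 with hA2def
  have hA1q : A1 ≡ t * x1 [MOD q] := by
    simpa only [add_zero] using (Nat.ModEq.refl (t * x1)).add (Nat.modEq_zero_iff_dvd.mpr (dvd_mul_right q y1))
  have hA2q : A2 ≡ t * x2 [MOD q] := by
    simpa only [add_zero] using (Nat.ModEq.refl (t * x2)).add (Nat.modEq_zero_iff_dvd.mpr (dvd_mul_right q y2))
  have hA1t : A1 ≡ q * y1 [MOD t] := by
    simpa only [zero_add] using (Nat.modEq_zero_iff_dvd.mpr (dvd_mul_right t x1)).add (Nat.ModEq.refl (q * y1))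
  have hA2t : A2 ≡ q * y2 [MOD t] := by
    simpa only [zero_add] using (Nat.modEq_zero_iff_dvd.mpr (dvd_mul_right t x2)).add (Nat.ModEq.refl (q * y2))
  rw [G_congr s lam hN (Nat.mod_modEq A1 (q * t)) (Nat.mod_modEq A2 (q * t))]
  have e1 : Nat.gcd A1 (Nat.gcd A2 q) = Nat.gcd (t * x1 % q) (Nat.gcd (t * t * x2 % q) q) := by
    rw [cond_congr hA1q hA2q, gcd_mod, mul_assoc,
      Nat.Coprime.gcd_mul_left_cancel (t * x2) htq,
      gcd_mod_of_dvd (t * x1) _ q (Nat.gcd_dvd_right (t * x2) q)]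
  have e2 : Nat.gcd A1 (Nat.gcd A2 t) = Nat.gcd (q * y1 % t) (Nat.gcd (q * q * y2 % t) t) := by
    rw [cond_congr hA1t hA2t, gcd_mod, mul_assoc,
      Nat.Coprime.gcd_mul_left_cancel (q * y2) hqt,
      gcd_mod_of_dvd (q * y1) _ t (Nat.gcd_dvd_right (q * y2) t)]
  have hv : ∀ i : Fin s, Vloc (q * t) (lam i * A1) (lam i * A2)
      = Vloc q (lam i * (t * x1 % q)) (lam i * (t * t * x2 % q))
        * Vloc t (lam i * (q * y1 % t)) (lam i * (q * q * y2 % t)) := by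
    intro i
    rw [Vloc_mul hq ht hqt]
    congr 1
    · have d1 := key_dvd q _ _ ((Nat.mod_modEq (t * x1) q).trans hA1q.symm) (lam i)
      have hn : (t * t * x2 % q) ≡ A2 * t [MOD q] := by
        refine (Nat.mod_modEq (t * t * x2) q).trans ?_
        rw [show t * t * x2 = t * x2 * t from by ring]
        exact (hA2q.mul_right t).symm
      have d2 := key_dvd q _ _ hn (lam i)
      rw [show ((A2 * t : ℕ) : ℤ) = (A2 : ℤ) * t from by push_cast; ring, ← mul_assoc] at d2
      exact Vloc_congr hq d1 d2
    · have d1 := key_dvd t _ _ ((Nat.mod_modEq (q * y1) t).trans hA1t.symm) (lam i)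
      have hn : (q * q * y2 % t) ≡ A2 * q [MOD t] := by
        refine (Nat.mod_modEq (q * q * y2) t).trans ?_
        rw [show q * q * y2 = q * y2 * q from by ring]
        exact (hA2t.mul_right q).symm
      have d2 := key_dvd t _ _ hn (lam i)
      rw [show ((A2 * q : ℕ) : ℤ) = (A2 : ℤ) * q from by push_cast; ring, ← mul_assoc] at d2
      exact Vloc_congr ht d1 d2
  have hmain : G s lam (q * t) A1 A2
      = if (Nat.gcd (t * x1 % q) (Nat.gcd (t * t * x2 % q) q) = 1
            ∧ Nat.gcd (q * y1 % t) (Nat.gcd (q * q * y2 % t) t) = 1)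
        then (∏ i, Vloc q (lam i * (t * x1 % q)) (lam i * (t * t * x2 % q)))
              * (∏ i, Vloc t (lam i * (q * y1 % t)) (lam i * (q * q * y2 % t)))
        else 0 := by
    unfold G
    refine if_congr ((cond_split hqt A1 A2).trans (by rw [e1, e2])) ?_ rfl
    rw [← Finset.prod_mul_distrib]
    exact Finset.prod_congr rfl fun i _ => hv i
  rw [hmain, ite_mul_ite]
  rfl

lemma Gq_unit (s : ℕ) (lam : Fin s → ℤ) {q t : ℕ} (htq : Nat.Coprime t q) :
    ∑ x1 ∈ range q, ∑ x2 ∈ range q, G s lam q (t * x1 % q) (t * t * x2 % q)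
      = ∑ x1 ∈ range q, ∑ x2 ∈ range q, G s lam q x1 x2 := by
  have h1 : ∀ u, ∑ x2 ∈ range q, G s lam q u (t * t * x2 % q)
      = ∑ x2 ∈ range q, G s lam q u x2 := fun u =>
    sum_range_unit q (t * t) (htq.mul htq) (fun m => G s lam q u m)
  calc ∑ x1 ∈ range q, ∑ x2 ∈ range q, G s lam q (t * x1 % q) (t * t * x2 % q)
      = ∑ x1 ∈ range q, ∑ x2 ∈ range q, G s lam q (t * x1 % q) x2 :=
        Finset.sum_congr rfl fun x1 _ => h1 _
    _ = ∑ x1 ∈ range q, ∑ x2 ∈ range q, G s lam q x1 x2 :=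
        sum_range_unit q t htq (fun m => ∑ x2 ∈ range q, G s lam q m x2)

lemma T_mul (s : ℕ) (lam : Fin s → ℤ) {q t : ℕ} (hq : 0 < q) (ht : 0 < t)
    (hqt : Nat.Coprime q t) :
    ∑ a1 ∈ range (q * t), ∑ a2 ∈ range (q * t), G s lam (q * t) a1 a2
      = (∑ a1 ∈ range q, ∑ a2 ∈ range q, G s lam q a1 a2)
        * (∑ a1 ∈ range t, ∑ a2 ∈ range t, G s lam t a1 a2) := by
  rw [sum_range_crt q t hq ht hqt
    (fun a1 => ∑ a2 ∈ range (q * t), G s lam (q * t) a1 a2)]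
  have step2 : ∀ x1 y1 : ℕ,
      ∑ a2 ∈ range (q * t), G s lam (q * t) ((t * x1 + q * y1) % (q * t)) a2
      = (∑ x2 ∈ range q, G s lam q (t * x1 % q) (t * t * x2 % q))
        * (∑ y2 ∈ range t, G s lam t (q * y1 % t) (q * q * y2 % t)) := by
    intro x1 y1
    rw [sum_range_crt q t hq ht hqt
      (fun a2 => G s lam (q * t) ((t * x1 + q * y1) % (q * t)) a2)]
    rw [Finset.sum_mul_sum]
    exact Finset.sum_congr rfl fun x2 _ => Finset.sum_congr rfl fun y2 _ =>
      G_split s lam hq ht hqt x1 y1 x2 y2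
  calc ∑ x1 ∈ range q, ∑ y1 ∈ range t,
        ∑ a2 ∈ range (q * t), G s lam (q * t) ((t * x1 + q * y1) % (q * t)) a2
      = ∑ x1 ∈ range q, ∑ y1 ∈ range t,
          (∑ x2 ∈ range q, G s lam q (t * x1 % q) (t * t * x2 % q))
          * (∑ y2 ∈ range t, G s lam t (q * y1 % t) (q * q * y2 % t)) :=
        Finset.sum_congr rfl fun x1 _ => Finset.sum_congr rfl fun y1 _ => step2 x1 y1
    _ = ∑ x1 ∈ range q, (∑ x2 ∈ range q, G s lam q (t * x1 % q) (t * t * x2 % q))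
          * ∑ y1 ∈ range t, ∑ y2 ∈ range t, G s lam t (q * y1 % t) (q * q * y2 % t) :=
        Finset.sum_congr rfl fun x1 _ => (Finset.mul_sum _ _ _).symm
    _ = (∑ x1 ∈ range q, ∑ x2 ∈ range q, G s lam q (t * x1 % q) (t * t * x2 % q))
          * ∑ y1 ∈ range t, ∑ y2 ∈ range t, G s lam t (q * y1 % t) (q * q * y2 % t) :=
        (Finset.sum_mul _ _ _).symm
    _ = (∑ a1 ∈ range q, ∑ a2 ∈ range q, G s lam q a1 a2)
        * (∑ a1 ∈ range t, ∑ a2 ∈ range t, G s lam t a1 a2) := by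
        rw [Gq_unit s lam hqt.symm]
        congr 1
        exact Gq_unit s lam hqt

end Stmt9

theorem stmt_9 (s : ℕ) (lam : Fin s → ℤ) (hlam : ∀ i, lam i ≠ 0)
    (q t : ℕ) (hq : 0 < q) (ht : 0 < t) (hqt : Nat.gcd q t = 1) :
    Vnorm s lam (q * t) = Vnorm s lam q * Vnorm s lam t := by
  rw [Stmt9.Vnorm_eq s lam (q * t) (Nat.mul_pos hq ht), Stmt9.Vnorm_eq s lam q hq,
    Stmt9.Vnorm_eq s lam t ht, Stmt9.T_mul s lam hq ht hqt]
  have hcast : ((q * t : ℕ) : ℂ) ^ (-(s : ℤ)) = (q : ℂ) ^ (-(s : ℤ)) * (t : ℂ) ^ (-(s : ℤ)) := by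
    push_cast
    rw [mul_zpow]
  rw [hcast]
  ring
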